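/- Consider the symmetric singleton congestion game built from a graph G = (V,E) with posterior p ∈ Δ(V), where resource r ∈ V has expected congestion function C^p_r(n) = 1 + 2·Σ_{r' adjacent to r} p_{r'} − p_r/n² for n ≥ 1, and a backup resource 0 with constant cost 1. In any pure Nash equilibrium, the set S = {r ∈ V : n_r > 0} of occupied non-backup resources satisfies: for every r ∈ S, p_r > 2·Σ_{r' ∈ adj(r)} p_{r'}. Consequently S is an independent set of G. -/

import Mathlib

open Finset

/-- in any pure NE of the graph-based game, every occupied resource r has
p_r > 2·Σ_{r'~r} p_{r'}, hence the occupied set is independent. -/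
theorem stmt9 {V : Type*} [Fintype V] [DecidableEq V]
    (G : SimpleGraph V) [DecidableRel G.Adj]
    (p : V → ℝ) (hp : ∀ r, 0 ≤ p r) (hps : ∑ r, p r = 1)
    (n : V → ℕ)
    (C : V → ℕ → ℝ)
    (hC : ∀ r m, C r m = 1 + 2 * (∑ r' ∈ G.neighborFinset r, p r') - p r / (m : ℝ) ^ 2)
    (heq : ∀ r, 0 < n r → C r (n r) < 1) :
    (∀ r, 0 < n r → 2 * (∑ r' ∈ G.neighborFinset r, p r') < p r) ∧
    (∀ r r', 0 < n r → 0 < n r' → ¬ G.Adj r r') := by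
  have key : ∀ r, 0 < n r → 2 * (∑ r' ∈ G.neighborFinset r, p r') < p r := by
    intro r hr
    have h := heq r hr
    rw [hC] at h
    have hn1 : (1 : ℝ) ≤ (n r : ℝ) ^ 2 := by
      have : (1 : ℕ) ≤ n r := hr
      have : (1 : ℝ) ≤ (n r : ℝ) := by exact_mod_cast this
      nlinarith
    have hdiv : p r / (n r : ℝ) ^ 2 ≤ p r := by
      rw [div_le_iff₀ (by linarith)]
      nlinarith [hp r]
    linarith
  refine ⟨key, ?_⟩
  intro r r' hr hr' hadj
  have h1 := key r hr
  have h2 := key r' hr'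
  have hle1 : p r' ≤ ∑ x ∈ G.neighborFinset r, p x :=
    single_le_sum (fun i _ => hp i) (by simpa using hadj)
  have hle2 : p r ≤ ∑ x ∈ G.neighborFinset r', p x :=
    single_le_sum (fun i _ => hp i) (by simpa using hadj.symm)
  linarith [hp r]
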